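/- arXiv:1612.08322 — 5 statements merged into one kernel-verified Lean document; each statement's English description precedes it below -/
import Mathlib

section
/- Let a and b be nonzero quaternions. If both ab and ba are complex numbers (i.e., have zero j-part and zero k-part), then one of the following holds: (i) a and b are both complex numbers; (ii) a = a*·j and b = b*·j for some complex numbers a*, b*; or (iii) b = r·conj(a) for some nonzero real number r. -/
local notation "ℍ" => Quaternion ℝ

/-- A quaternion is a complex number if its j-part and k-part vanish. -/
def IsComplexQ (q : ℍ) : Prop := q.imJ = 0 ∧ q.imK = 0

/-- The quaternion j. -/
def qj : ℍ := ⟨0, 0, 1, 0⟩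

set_option maxHeartbeats 1000000 in
theorem stmt0 (a b : ℍ) (ha : a ≠ 0) (hb : b ≠ 0)
    (hab : IsComplexQ (a * b)) (hba : IsComplexQ (b * a)) :
    (IsComplexQ a ∧ IsComplexQ b) ∨
    (∃ as bs : ℍ, IsComplexQ as ∧ IsComplexQ bs ∧ a = as * qj ∧ b = bs * qj) ∨
    (∃ r : ℝ, r ≠ 0 ∧ b = r • star a) := by
  obtain ⟨h1, h2⟩ := hab
  obtain ⟨h3, h4⟩ := hba
  simp only [Quaternion.imJ_mul, Quaternion.imK_mul] at h1 h2 h3 h4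
  set a0 := a.re with ha0; set a1 := a.imI with ha1
  set a2 := a.imJ with ha2; set a3 := a.imK with ha3
  set b0 := b.re with hb0; set b1 := b.imI with hb1
  set b2 := b.imJ with hb2; set b3 := b.imK with hb3
  have P1 : a0 * b2 + a2 * b0 = 0 := by linarith
  have P2 : a0 * b3 + a3 * b0 = 0 := by linarith
  have P3 : a1 * b2 - a2 * b1 = 0 := by linarith
  have P4 : a1 * b3 - a3 * b1 = 0 := by linarith
  by_cases hA : a2 = 0 ∧ a3 = 0
  · obtain ⟨hJ, hK⟩ := hA
    have hN : a0 ^ 2 + a1 ^ 2 ≠ 0 := by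
      intro h
      apply ha
      have h0 : a0 = 0 := by nlinarith [sq_nonneg a0, sq_nonneg a1]
      have h1' : a1 = 0 := by nlinarith [sq_nonneg a0, sq_nonneg a1]
      ext <;> simp [← ha0, ← ha1, ← ha2, ← ha3, h0, h1', hJ, hK, Quaternion.re_zero, Quaternion.imI_zero, Quaternion.imJ_zero, Quaternion.imK_zero]
    left
    refine ⟨⟨hJ, hK⟩, ?_, ?_⟩
    · have : b2 * (a0 ^ 2 + a1 ^ 2) = 0 := by
        linear_combination a0 * P1 + a1 * P3 + (a1 * b1 - a0 * b0) * hJ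
      exact (mul_eq_zero.mp this).resolve_right hN
    · have : b3 * (a0 ^ 2 + a1 ^ 2) = 0 := by
        linear_combination a0 * P2 + a1 * P4 + (a1 * b1 - a0 * b0) * hK
      exact (mul_eq_zero.mp this).resolve_right hN
  · by_cases hB : a0 = 0 ∧ a1 = 0
    · obtain ⟨h0, h1'⟩ := hB
      have hM : a2 ^ 2 + a3 ^ 2 ≠ 0 := by
        intro h
        apply hA
        constructor <;> nlinarith [sq_nonneg a2, sq_nonneg a3]
      have hb0' : b0 = 0 := by
        have : b0 * (a2 ^ 2 + a3 ^ 2) = 0 := by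
          linear_combination a2 * P1 + a3 * P2 - (a2 * b2 + a3 * b3) * h0
        exact (mul_eq_zero.mp this).resolve_right hM
      have hb1' : b1 = 0 := by
        have : b1 * (a2 ^ 2 + a3 ^ 2) = 0 := by
          linear_combination -a2 * P3 - a3 * P4 + (a2 * b2 + a3 * b3) * h1'
        exact (mul_eq_zero.mp this).resolve_right hM
      right; left
      refine ⟨⟨a2, a3, 0, 0⟩, ⟨b2, b3, 0, 0⟩, ⟨rfl, rfl⟩, ⟨rfl, rfl⟩, ?_, ?_⟩
      · ext <;>
          simp [qj, Quaternion.re_mul, Quaternion.imI_mul, Quaternion.imJ_mul,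
            Quaternion.imK_mul, ← ha0, ← ha1, ← ha2, ← ha3, h0, h1'] <;> erw [QuaternionAlgebra.mk_mul_mk] <;> simp
      · ext <;>
          simp [qj, Quaternion.re_mul, Quaternion.imI_mul, Quaternion.imJ_mul,
            Quaternion.imK_mul, ← hb0, ← hb1, ← hb2, ← hb3, hb0', hb1'] <;> erw [QuaternionAlgebra.mk_mul_mk] <;> simp
    · -- Case C : α ≠ 0 and β ≠ 0
      have hN : a0 ^ 2 + a1 ^ 2 ≠ 0 := by
        intro h
        apply hB
        constructor <;> nlinarith [sq_nonneg a0, sq_nonneg a1]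
      have hM : a2 ^ 2 + a3 ^ 2 ≠ 0 := by
        intro h
        apply hA
        constructor <;> nlinarith [sq_nonneg a2, sq_nonneg a3]
      have hIm : a0 * b1 + a1 * b0 = 0 := by
        have key : (a2 ^ 2 + a3 ^ 2) * (a0 * b1 + a1 * b0) = 0 := by linear_combination a2 * a1 * P1 - a2 * a0 * P3 + a3 * a1 * P2 - a3 * a0 * P4
        exact (mul_eq_zero.mp key).resolve_left hM
      set r : ℝ := (a0 * b0 - a1 * b1) / (a0 ^ 2 + a1 ^ 2) with hr
      have hrN : r * (a0 ^ 2 + a1 ^ 2) = a0 * b0 - a1 * b1 := by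
        rw [hr, div_mul_cancel₀ _ hN]
      have e0 : b0 = r * a0 := by
        have : (b0 - r * a0) * (a0 ^ 2 + a1 ^ 2) = 0 := by
          linear_combination (-a0) * hrN + a1 * hIm
        have := (mul_eq_zero.mp this).resolve_right hN
        linarith
      have e1 : b1 = -(r * a1) := by
        have : (b1 + r * a1) * (a0 ^ 2 + a1 ^ 2) = 0 := by
          linear_combination a1 * hrN + a0 * hIm
        have := (mul_eq_zero.mp this).resolve_right hN
        linarith
      have e2 : b2 = -(r * a2) := by
        have : (b2 + r * a2) * (a0 ^ 2 + a1 ^ 2) = 0 := by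
          linear_combination a2 * hrN + a0 * P1 + a1 * P3
        have := (mul_eq_zero.mp this).resolve_right hN
        linarith
      have e3 : b3 = -(r * a3) := by
        have : (b3 + r * a3) * (a0 ^ 2 + a1 ^ 2) = 0 := by
          linear_combination a3 * hrN + a0 * P2 + a1 * P4
        have := (mul_eq_zero.mp this).resolve_right hN
        linarith
      right; right
      refine ⟨r, ?_, ?_⟩
      · intro hr0
        apply hb
        ext <;> simp [← hb0, ← hb1, ← hb2, ← hb3, e0, e1, e2, e3, hr0, Quaternion.re_zero, Quaternion.imI_zero, Quaternion.imJ_zero, Quaternion.imK_zero]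
      · ext <;>
          simp [← ha0, ← ha1, ← ha2, ← ha3, ← hb0, ← hb1, ← hb2, ← hb3,
            e0, e1, e2, e3, Quaternion.re_smul, Quaternion.imI_smul,
            Quaternion.imJ_smul, Quaternion.imK_smul]
end

section
/- For a quaternion q, if both q·i·conj(q) and conj(q)·i·q are complex numbers, then either q is a complex number or q = q*·j for some complex number q*. -/
local notation "ℍ" => Quaternion ℝ

def qi : ℍ := ⟨0, 1, 0, 0⟩
theorem quat_mk_mul_mk (a₁ a₂ a₃ a₄ b₁ b₂ b₃ b₄ : ℝ) :
    @HMul.hMul ℍ ℍ ℍ _ (QuaternionAlgebra.mk a₁ a₂ a₃ a₄) (QuaternionAlgebra.mk b₁ b₂ b₃ b₄) =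
      (QuaternionAlgebra.mk (a₁ * b₁ - a₂ * b₂ - a₃ * b₃ - a₄ * b₄) (a₁ * b₂ + a₂ * b₁ + a₃ * b₄ - a₄ * b₃)
        (a₁ * b₃ - a₂ * b₄ + a₃ * b₁ + a₄ * b₂) (a₁ * b₄ + a₂ * b₃ - a₃ * b₂ + a₄ * b₁) : ℍ) := by
  let x : ℍ := QuaternionAlgebra.mk a₁ a₂ a₃ a₄
  let y : ℍ := QuaternionAlgebra.mk b₁ b₂ b₃ b₄
  have h1 := Quaternion.re_mul x y
  have h2 := Quaternion.imI_mul x y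
  have h3 := Quaternion.imJ_mul x y
  have h4 := Quaternion.imK_mul x y
  exact QuaternionAlgebra.ext h1 h2 h3 h4

theorem quat_star_mk (a₁ a₂ a₃ a₄ : ℝ) :
    @star ℍ _ (QuaternionAlgebra.mk a₁ a₂ a₃ a₄) = (QuaternionAlgebra.mk a₁ (-a₂) (-a₃) (-a₄) : ℍ) := by
  let x : ℍ := QuaternionAlgebra.mk a₁ a₂ a₃ a₄
  exact QuaternionAlgebra.ext (Quaternion.re_star x) (Quaternion.imI_star x) (Quaternion.imJ_star x)
    (Quaternion.imK_star x)

theorem stmt1 (q : ℍ)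
    (h1 : IsComplexQ (q * qi * star q)) (h2 : IsComplexQ (star q * qi * q)) :
    IsComplexQ q ∨ ∃ qs : ℍ, IsComplexQ qs ∧ q = qs * qj := by
  obtain ⟨a, b, c, d⟩ := q
  simp only [IsComplexQ, qi, qj, Quaternion.imJ_mul, Quaternion.imK_mul,
    Quaternion.re_mul, Quaternion.imI_mul, Quaternion.re_star, Quaternion.imI_star,
    Quaternion.imJ_star, Quaternion.imK_star, quat_mk_mul_mk, quat_star_mk] at h1 h2
  obtain ⟨e1, e2⟩ := h1
  obtain ⟨e3, e4⟩ := h2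
  have hbc : b * c = 0 := by linear_combination e1 / 4 + e3 / 4
  have had : a * d = 0 := by linear_combination e1 / 4 - e3 / 4
  have hbd : b * d = 0 := by linear_combination e2 / 4 + e4 / 4
  have hac : a * c = 0 := by linear_combination e4 / 4 - e2 / 4
  by_cases hc : c = 0 ∧ d = 0
  · exact Or.inl ⟨hc.1, hc.2⟩
  · right
    refine ⟨⟨c, d, 0, 0⟩, ⟨rfl, rfl⟩, ?_⟩
    have ha : a = 0 := by
      rcases not_and_or.mp hc with h | h
      · exact (mul_eq_zero.mp hac).resolve_right h
      · exact (mul_eq_zero.mp had).resolve_right h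
    have hb : b = 0 := by
      rcases not_and_or.mp hc with h | h
      · exact (mul_eq_zero.mp hbc).resolve_right h
      · exact (mul_eq_zero.mp hbd).resolve_right h
    ext <;> simp [qj, ha, hb, Quaternion.re_mul, Quaternion.imI_mul, Quaternion.imJ_mul, Quaternion.imK_mul, quat_mk_mul_mk]
end

section
/- Let λ > 1 be real and let μ, ν be unit quaternions. If for every positive integer n the quaternion (λⁿ + λ⁻ⁿ)μⁿ + νⁿ is a complex number, then μ and ν are both complex numbers (hence lie in U(1)). -/
local notation "ℍ" => Quaternion ℝ

private lemma key_real (l a c y v : ℝ) (hl : 1 < l) (ha : a ^ 2 ≤ 1)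
    (e1 : (l + l⁻¹) * y + v = 0)
    (e2 : (l ^ 2 + l⁻¹ ^ 2) * (2 * a * y) + 2 * c * v = 0)
    (e3 : (l ^ 3 + l⁻¹ ^ 3) * ((4 * a ^ 2 - 1) * y) + (4 * c ^ 2 - 1) * v = 0) :
    y = 0 ∧ v = 0 := by
  have hl0 : (0:ℝ) < l := lt_trans one_pos hl
  have hlne : l ≠ 0 := ne_of_gt hl0
  set e : ℝ := l + l⁻¹ with he_def
  have hinv : l * l⁻¹ = 1 := mul_inv_cancel₀ hlne
  have he : 2 < e := by
    have h1 : (l - 1) ^ 2 > 0 := by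
      have : l - 1 ≠ 0 := by intro h0; apply hlne; nlinarith
      positivity
    have key : (e - 2) * l = (l - 1) ^ 2 := by
      rw [he_def]; field_simp; ring
    nlinarith [key, h1, hl0]
  have h2 : l ^ 2 + l⁻¹ ^ 2 = e ^ 2 - 2 := by
    field_simp [he_def]
    rw [he_def]; field_simp; ring
  have h3 : l ^ 3 + l⁻¹ ^ 3 = e ^ 3 - 3 * e := by
    field_simp [he_def]
    rw [he_def]; field_simp; ring
  rcases eq_or_ne y 0 with hy | hy
  · subst hy
    constructor
    · rfl
    · linarith [e1]
  · exfalso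
    have hv : v = -(e * y) := by linarith [e1]
    have hA : (a * (e ^ 2 - 2)) * y = (c * e) * y := by
      rw [h2] at e2
      linear_combination (1/2) * e2 - c * hv
    have hB : ((4 * a ^ 2 - 1) * (e ^ 3 - 3 * e)) * y = ((4 * c ^ 2 - 1) * e) * y := by
      rw [h3] at e3
      linear_combination e3 - (4 * c ^ 2 - 1) * hv
    have hA' : a * (e ^ 2 - 2) = c * e := mul_right_cancel₀ hy hA
    have hB' : (4 * a ^ 2 - 1) * (e ^ 3 - 3 * e) = (4 * c ^ 2 - 1) * e :=
      mul_right_cancel₀ hy hB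
    have hD : (e ^ 2 - 4) * (4 * a ^ 2 - e ^ 2) = 0 := by
      linear_combination e * hB' - 4 * (a * (e ^ 2 - 2) + c * e) * hA'
    have h4 : 0 < e ^ 2 - 4 := by nlinarith
    have h5 : 4 * a ^ 2 - e ^ 2 = 0 := by
      rcases mul_eq_zero.mp hD with h | h
      · linarith
      · exact h
    linarith

theorem stmt6 (l : ℝ) (hl : 1 < l) (μ ν : ℍ) (hμ : ‖μ‖ = 1) (hν : ‖ν‖ = 1)
    (h : ∀ n : ℕ, 0 < n → IsComplexQ ((l ^ n + l⁻¹ ^ n) • μ ^ n + ν ^ n)) :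
    IsComplexQ μ ∧ IsComplexQ ν := by
  have nμ : μ.re ^ 2 + μ.imI ^ 2 + μ.imJ ^ 2 + μ.imK ^ 2 = 1 := by
    have := Quaternion.normSq_eq_norm_mul_self μ
    rw [hμ, mul_one] at this
    simpa [Quaternion.normSq_def'] using this
  have nν : ν.re ^ 2 + ν.imI ^ 2 + ν.imJ ^ 2 + ν.imK ^ 2 = 1 := by
    have := Quaternion.normSq_eq_norm_mul_self ν
    rw [hν, mul_one] at this
    simpa [Quaternion.normSq_def'] using this
  have ha : μ.re ^ 2 ≤ 1 := by nlinarith [sq_nonneg μ.imI, sq_nonneg μ.imJ, sq_nonneg μ.imK]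
  obtain ⟨h1j, h1k⟩ := h 1 one_pos
  obtain ⟨h2j, h2k⟩ := h 2 two_pos
  obtain ⟨h3j, h3k⟩ := h 3 three_pos
  simp only [pow_succ, pow_zero, one_mul, Quaternion.imJ_add, Quaternion.imJ_smul,
    Quaternion.imJ_mul, Quaternion.imK_add, Quaternion.imK_smul, Quaternion.imK_mul,
    Quaternion.re_mul, Quaternion.imI_mul, smul_eq_mul] at h1j h1k h2j h2k h3j h3k
  have e1j : (l + l⁻¹) * μ.imJ + ν.imJ = 0 := by linear_combination h1j
  have e1k : (l + l⁻¹) * μ.imK + ν.imK = 0 := by linear_combination h1k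
  have e2j : (l ^ 2 + l⁻¹ ^ 2) * (2 * μ.re * μ.imJ) + 2 * ν.re * ν.imJ = 0 := by
    linear_combination h2j
  have e2k : (l ^ 2 + l⁻¹ ^ 2) * (2 * μ.re * μ.imK) + 2 * ν.re * ν.imK = 0 := by
    linear_combination h2k
  have e3j : (l ^ 3 + l⁻¹ ^ 3) * ((4 * μ.re ^ 2 - 1) * μ.imJ)
      + (4 * ν.re ^ 2 - 1) * ν.imJ = 0 := by
    linear_combination h3j + (l ^ 3 + l⁻¹ ^ 3) * μ.imJ * nμ + ν.imJ * nν
  have e3k : (l ^ 3 + l⁻¹ ^ 3) * ((4 * μ.re ^ 2 - 1) * μ.imK)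
      + (4 * ν.re ^ 2 - 1) * ν.imK = 0 := by
    linear_combination h3k + (l ^ 3 + l⁻¹ ^ 3) * μ.imK * nμ + ν.imK * nν
  obtain ⟨hy, hv⟩ := key_real l μ.re ν.re μ.imJ ν.imJ hl ha e1j e2j e3j
  obtain ⟨hz, hw⟩ := key_real l μ.re ν.re μ.imK ν.imK hl ha e1k e2k e3k
  exact ⟨⟨hy, hz⟩, ⟨hv, hw⟩⟩
end

section
/- Let λ > 1, θ ∈ ℝ, and let a, e, l be quaternions. Suppose a + e + l, λe^{iθ}a + e^{−2iθ}e + (1/λ)e^{iθ}l, and (1/λ)e^{−iθ}a + e^{2iθ}e + λe^{−iθ}l are all complex numbers. Then a, e, and l are complex numbers. -/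
local notation "ℍ" => Quaternion ℝ

/-- `e^{iθ}` as a quaternion. -/
noncomputable def eI (θ : ℝ) : ℍ := ⟨Real.cos θ, Real.sin θ, 0, 0⟩

/-- The "j,k"-part of a quaternion, packaged as a complex number. -/
def wq (q : ℍ) : ℂ := ⟨q.imJ, q.imK⟩

lemma wq_add (p q : ℍ) : wq (p + q) = wq p + wq q := by
  apply Complex.ext <;> simp [wq]

lemma wq_eI_mul (θ : ℝ) (q : ℍ) :
    wq (eI θ * q) = (⟨Real.cos θ, Real.sin θ⟩ : ℂ) * wq q := by
  apply Complex.ext <;>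
    simp only [wq, Quaternion.imJ_mul, Quaternion.imK_mul] <;>
    simp [eI, Complex.mul_re, Complex.mul_im] <;>
    ring

lemma wq_smul (r : ℝ) (q : ℍ) : wq (r • q) = (r : ℂ) * wq q := by
  apply Complex.ext <;> simp [wq]

lemma isComplexQ_iff (q : ℍ) : IsComplexQ q ↔ wq q = 0 := by
  simp [IsComplexQ, wq, Complex.ext_iff]

open Complex in
/-- The key linear-algebra fact over ℂ. -/
lemma keyC (lam : ℝ) (hl : 1 < lam) (u a e l : ℂ) (hu : ‖u‖ = 1)
    (E1 : a + e + l = 0)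
    (E2 : (lam : ℂ) * u * a + (starRingEnd ℂ u) ^ 2 * e + (1 / lam) * u * l = 0)
    (E3 : (1 / lam) * (starRingEnd ℂ u) * a + u ^ 2 * e + (lam : ℂ) * (starRingEnd ℂ u) * l = 0) :
    a = 0 ∧ e = 0 ∧ l = 0 := by
  have hu0 : u ≠ 0 := by
    intro h; rw [h] at hu; simp at hu
  have hlam0 : (lam : ℂ) ≠ 0 := by
    have : (0:ℝ) < lam := lt_trans one_pos hl
    exact_mod_cast this.ne'
  have hconj : starRingEnd ℂ u = u⁻¹ := by
    rw [Complex.inv_def, Complex.normSq_eq_norm_sq, hu]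
    simp
  rw [hconj] at E2 E3
  -- eliminate e
  have F2 : ((lam : ℂ) * u - u⁻¹ ^ 2) * a + ((1/lam) * u - u⁻¹ ^ 2) * l = 0 := by
    linear_combination E2 - u⁻¹ ^ 2 * E1
  have F3 : ((1/lam) * u⁻¹ - u ^ 2) * a + ((lam : ℂ) * u⁻¹ - u ^ 2) * l = 0 := by
    linear_combination E3 - u ^ 2 * E1
  set A : ℂ := (lam : ℂ) * u - u⁻¹ ^ 2 with hA
  set B : ℂ := (1/lam) * u - u⁻¹ ^ 2 with hB
  set C : ℂ := (1/lam) * u⁻¹ - u ^ 2 with hC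
  set D : ℂ := (lam : ℂ) * u⁻¹ - u ^ 2 with hD
  have ha : (A * D - B * C) * a = 0 := by linear_combination D * F2 - B * F3
  have hll : (A * D - B * C) * l = 0 := by linear_combination A * F3 - C * F2
  -- the determinant is a nonzero real number
  have huinv : u⁻¹ = starRingEnd ℂ u := hconj.symm
  have ht : u ^ 3 + u⁻¹ ^ 3 = ((2 * (u ^ 3).re : ℝ) : ℂ) := by
    rw [huinv, ← map_pow, Complex.add_conj]
  set t : ℝ := (u ^ 3).re with htdef
  have hdet : A * D - B * C =
      (((lam - 1/lam) * ((lam + 1/lam) - 2 * t) : ℝ) : ℂ) := by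
    have huv : u * u⁻¹ = 1 := mul_inv_cancel₀ hu0
    have expand : A * D - B * C =
        ((lam : ℂ)^2 - (1/lam)^2) - ((lam : ℂ) - 1/lam) * (u ^ 3 + u⁻¹ ^ 3) := by
      rw [hA, hB, hC, hD]
      linear_combination ((lam : ℂ)^2 - (1/lam)^2) * huv
    rw [expand, ht]
    push_cast
    field_simp
    ring
  have htle : t ≤ 1 := by
    calc t ≤ ‖u ^ 3‖ := Complex.re_le_norm _
    _ = 1 := by rw [norm_pow, hu]; norm_num
  have hdetR : (lam - 1/lam) * ((lam + 1/lam) - 2 * t) ≠ 0 := by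
    have h1 : 0 < lam - 1/lam := by
      have : 0 < lam := lt_trans one_pos hl
      rw [sub_pos, div_lt_iff₀ this]
      nlinarith
    have h2 : 0 < (lam + 1/lam) - 2 * t := by
      have hpos : 0 < lam := lt_trans one_pos hl
      have h2' : 2 < lam + 1/lam := by
        have hstep : (2*lam)/lam < (lam^2+1)/lam := by
          apply (div_lt_div_iff_of_pos_right hpos).mpr
          nlinarith
        have e1 : (2*lam)/lam = 2 := by field_simp
        have e2 : (lam^2+1)/lam = lam + 1/lam := by field_simp
        rw [e1, e2] at hstep
        exact hstep
      linarith
    positivity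
  have hdet0 : A * D - B * C ≠ 0 := by
    rw [hdet]
    exact_mod_cast hdetR
  have ha0 : a = 0 := by
    rcases mul_eq_zero.mp ha with h | h
    · exact absurd h hdet0
    · exact h
  have hl0 : l = 0 := by
    rcases mul_eq_zero.mp hll with h | h
    · exact absurd h hdet0
    · exact h
  have he0 : e = 0 := by linear_combination E1 - ha0 - hl0
  exact ⟨ha0, he0, hl0⟩

theorem stmt7 (lam θ : ℝ) (hl : 1 < lam) (a e l : ℍ)
    (h1 : IsComplexQ (a + e + l))
    (h2 : IsComplexQ ((lam • eI θ) * a + eI (-2 * θ) * e + ((1 / lam) • eI θ) * l))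
    (h3 : IsComplexQ (((1 / lam) • eI (-θ)) * a + eI (2 * θ) * e + (lam • eI (-θ)) * l)) :
    IsComplexQ a ∧ IsComplexQ e ∧ IsComplexQ l := by
  set u : ℂ := ⟨Real.cos θ, Real.sin θ⟩ with hudef
  have hu : ‖u‖ = 1 := by
    rw [Complex.norm_def, Complex.normSq_mk]
    rw [show Real.cos θ * Real.cos θ + Real.sin θ * Real.sin θ = 1 by
      linear_combination Real.sin_sq_add_cos_sq θ]
    exact Real.sqrt_one
  have hc2 : Real.cos (2 * θ) = Real.cos θ ^ 2 - Real.sin θ ^ 2 := by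
    rw [Real.cos_two_mul]
    linear_combination Real.sin_sq_add_cos_sq θ
  have hs2 : Real.sin (2 * θ) = 2 * Real.sin θ * Real.cos θ := Real.sin_two_mul θ
  have hm2 : (⟨Real.cos (-2 * θ), Real.sin (-2 * θ)⟩ : ℂ) = (starRingEnd ℂ u) ^ 2 := by
    rw [show (-2 * θ) = -(2 * θ) by ring, Real.cos_neg, Real.sin_neg, hc2, hs2]
    apply Complex.ext <;> simp [hudef, pow_two, Complex.mul_re, Complex.mul_im] <;> ring
  have hp2 : (⟨Real.cos (2 * θ), Real.sin (2 * θ)⟩ : ℂ) = u ^ 2 := by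
    rw [hc2, hs2]
    apply Complex.ext <;> simp [hudef, pow_two, Complex.mul_re, Complex.mul_im] <;> ring
  have hneg : (⟨Real.cos (-θ), Real.sin (-θ)⟩ : ℂ) = starRingEnd ℂ u := by
    apply Complex.ext <;> simp [hudef]
  rw [isComplexQ_iff] at h1 h2 h3
  rw [wq_add, wq_add] at h1 h2 h3
  rw [smul_mul_assoc, smul_mul_assoc] at h2 h3
  rw [wq_smul, wq_smul, wq_eI_mul, wq_eI_mul, wq_eI_mul] at h2
  rw [wq_smul, wq_smul, wq_eI_mul, wq_eI_mul, wq_eI_mul] at h3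
  rw [hm2] at h2
  rw [hp2, hneg] at h3
  have E2 : (lam : ℂ) * u * wq a + (starRingEnd ℂ u) ^ 2 * wq e + (1 / lam) * u * wq l = 0 := by
    rw [← h2, hudef]; push_cast; ring
  have E3 : (1 / lam) * (starRingEnd ℂ u) * wq a + u ^ 2 * wq e
      + (lam : ℂ) * (starRingEnd ℂ u) * wq l = 0 := by
    rw [← h3]; push_cast; ring
  obtain ⟨ha, he, hlq⟩ := keyC lam hl u (wq a) (wq e) (wq l) hu h1 E2 E3
  exact ⟨(isComplexQ_iff a).mpr ha, (isComplexQ_iff e).mpr he, (isComplexQ_iff l).mpr hlq⟩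
end

section
/- Let z₁, z₂, z₃, z₄ ∈ ℂ, λ > 1, θ ∈ ℝ with θ not congruent to 0 modulo π/2, and let p, q, u, v be quaternions satisfying, for n = 1, 2, 3, 4: λⁿcos(2nθ)·p − λⁿsin(2nθ)·q + cos(nθ)·u + sin(nθ)·v = zₙ. Then p, q, u, v are all complex numbers. -/
local notation "ℍ" => Quaternion ℝ

open Complex in
lemma keyC_s17 (x c : Fin 4 → ℂ) (hx : Function.Injective x) (hx0 : ∀ j, x j ≠ 0)
    (h : ∀ n : Fin 4, ∑ j, x j ^ ((n : ℕ) + 1) * c j = 0) : c = 0 := by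
  set M : Matrix (Fin 4) (Fin 4) ℂ := Matrix.of fun n j => x j ^ ((n : ℕ) + 1) with hM
  have hdet : M.det ≠ 0 := by
    have hEq : M = Matrix.of fun n j => x j * (Matrix.vandermonde x).transpose n j := by
      ext n j
      simp [hM, Matrix.vandermonde, pow_succ, mul_comm]
    rw [hEq, Matrix.det_mul_row, Matrix.det_transpose]
    exact mul_ne_zero (Finset.prod_ne_zero_iff.2 fun j _ => hx0 j)
      (Matrix.det_vandermonde_ne_zero_iff.2 hx)
  have hv : M.mulVec c = 0 := by
    funext n
    simpa [M, Matrix.mulVec, dotProduct] using h n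
  exact Matrix.eq_zero_of_mulVec_eq_zero hdet hv

open Complex in
lemma inj4 (a b : ℂ) (ha : a ≠ (starRingEnd ℂ) a) (hb : b ≠ (starRingEnd ℂ) b)
    (hab : ‖a‖ ≠ ‖b‖) :
    Function.Injective ![a, (starRingEnd ℂ) a, b, (starRingEnd ℂ) b] := by
  have key : ∀ u v : ℂ, ‖u‖ ≠ ‖v‖ → u ≠ v := by
    intro u v huv hEq; exact huv (by rw [hEq])
  have h02 : a ≠ b := key _ _ hab
  have h03 : a ≠ (starRingEnd ℂ) b := key _ _ (by rwa [Complex.norm_conj])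
  have h12 : (starRingEnd ℂ) a ≠ b := key _ _ (by rwa [Complex.norm_conj])
  have h13 : (starRingEnd ℂ) a ≠ (starRingEnd ℂ) b :=
    key _ _ (by rwa [Complex.norm_conj, Complex.norm_conj])
  have h10 : (starRingEnd ℂ) a ≠ a := ha.symm
  have h20 : b ≠ a := h02.symm
  have h30 : (starRingEnd ℂ) b ≠ a := h03.symm
  have h21 : b ≠ (starRingEnd ℂ) a := h12.symm
  have h31 : (starRingEnd ℂ) b ≠ (starRingEnd ℂ) a := h13.symm
  have h32 : (starRingEnd ℂ) b ≠ b := hb.symm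
  intro i j hij
  fin_cases i <;> fin_cases j <;> simp at hij ⊢ <;>
    first
      | exact absurd hij ha | exact absurd hij hb
      | exact absurd hij h02 | exact absurd hij h03
      | exact absurd hij h12 | exact absurd hij h13
      | exact absurd hij h10 | exact absurd hij h20
      | exact absurd hij h30 | exact absurd hij h21
      | exact absurd hij h31 | exact absurd hij h32

open Complex in
lemma keyR (lam θ P Q U V : ℝ) (hlam : 1 < lam) (hs : Real.sin θ ≠ 0)
    (hc : Real.cos θ ≠ 0)
    (h : ∀ n : ℕ, 1 ≤ n → n ≤ 4 →
      lam ^ n * Real.cos (2 * n * θ) * P - lam ^ n * Real.sin (2 * n * θ) * Q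
        + Real.cos (n * θ) * U + Real.sin (n * θ) * V = 0) :
    P = 0 ∧ Q = 0 ∧ U = 0 ∧ V = 0 := by
  have hlam0 : (0:ℝ) < lam := lt_trans one_pos hlam
  have hs2 : Real.sin (2 * θ) ≠ 0 := by
    rw [Real.sin_two_mul]; exact mul_ne_zero (mul_ne_zero two_ne_zero hs) hc
  obtain ⟨w, hw⟩ : ∃ w : ℂ, w = Complex.exp ((θ : ℂ) * I) := ⟨_, rfl⟩
  obtain ⟨μ, hμ⟩ : ∃ μ : ℂ, μ = (lam : ℂ) * Complex.exp (((2 * θ : ℝ) : ℂ) * I) := ⟨_, rfl⟩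
  have habsw : ‖w‖ = 1 := by rw [hw]; exact Complex.norm_exp_ofReal_mul_I θ
  have habsμ : ‖μ‖ = lam := by
    rw [hμ, norm_mul, Complex.norm_exp_ofReal_mul_I, Complex.norm_real, Real.norm_eq_abs,
      abs_of_pos hlam0, mul_one]
  have hwim : w.im = Real.sin θ := by rw [hw]; exact Complex.exp_ofReal_mul_I_im θ
  have hμim : μ.im = lam * Real.sin (2 * θ) := by
    rw [hμ, Complex.mul_im, Complex.ofReal_re, Complex.ofReal_im,
      Complex.exp_ofReal_mul_I_im, Complex.exp_ofReal_mul_I_re, zero_mul, add_zero]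
  have hμim0 : μ.im ≠ 0 := by rw [hμim]; exact mul_ne_zero (ne_of_gt hlam0) hs2
  have hwim0 : w.im ≠ 0 := by rw [hwim]; exact hs
  have hconjne : ∀ z : ℂ, z.im ≠ 0 → z ≠ (starRingEnd ℂ) z := by
    intro z hz hEq
    have := congrArg Complex.im hEq
    simp only [Complex.conj_im] at this
    exact hz (by linarith)
  have habsne : ‖μ‖ ≠ ‖w‖ := by
    rw [habsμ, habsw]; exact ne_of_gt hlam
  set x : Fin 4 → ℂ := ![μ, (starRingEnd ℂ) μ, w, (starRingEnd ℂ) w] with hx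
  set cc : Fin 4 → ℂ := ![⟨P, Q⟩, (starRingEnd ℂ) ⟨P, Q⟩, ⟨U, -V⟩, (starRingEnd ℂ) ⟨U, -V⟩]
    with hcc
  have hinj : Function.Injective x :=
    inj4 μ w (hconjne μ hμim0) (hconjne w hwim0) habsne
  have hx0 : ∀ j, x j ≠ 0 := by
    have hμ0 : μ ≠ 0 := fun hEq => by simp [hEq] at hμim0
    have hw0 : w ≠ 0 := fun hEq => by simp [hEq] at hwim0
    intro j; fin_cases j <;> simp [hx, hμ0, hw0]
  have hsum : ∀ n : Fin 4, ∑ j, x j ^ ((n : ℕ) + 1) * cc j = 0 := by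
    intro n
    set m : ℕ := (n : ℕ) + 1 with hm
    have hm1 : 1 ≤ m := Nat.le_add_left 1 _
    have hm4 : m ≤ 4 := by omega
    have e1 : Complex.exp (((2 * (m:ℝ) * θ : ℝ) : ℂ) * I)
        = ⟨Real.cos (2 * m * θ), Real.sin (2 * m * θ)⟩ := by
      apply Complex.ext
      · exact Complex.exp_ofReal_mul_I_re _
      · exact Complex.exp_ofReal_mul_I_im _
    have e2 : Complex.exp ((((m:ℝ) * θ : ℝ) : ℂ) * I)
        = ⟨Real.cos (m * θ), Real.sin (m * θ)⟩ := by
      apply Complex.ext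
      · exact Complex.exp_ofReal_mul_I_re _
      · exact Complex.exp_ofReal_mul_I_im _
    have hμpow : μ ^ m = ((lam ^ m : ℝ) : ℂ) * (⟨Real.cos (2 * m * θ), Real.sin (2 * m * θ)⟩ : ℂ) := by
      rw [hμ, mul_pow, ← Complex.exp_nat_mul, ← e1]
      push_cast
      ring_nf
    have hwpow : w ^ m = (⟨Real.cos (m * θ), Real.sin (m * θ)⟩ : ℂ) := by
      rw [hw, ← Complex.exp_nat_mul, ← e2]
      push_cast
      ring_nf
    have hsre : (μ ^ m * ⟨P, Q⟩ + w ^ m * ⟨U, -V⟩).re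
        = lam ^ m * Real.cos (2 * m * θ) * P - lam ^ m * Real.sin (2 * m * θ) * Q
          + Real.cos (m * θ) * U + Real.sin (m * θ) * V := by
      rw [hμpow, hwpow]
      simp only [Complex.add_re, Complex.mul_re, Complex.mul_im,
        Complex.ofReal_re, Complex.ofReal_im]
      ring
    have hkey : (μ ^ m * ⟨P, Q⟩ + w ^ m * ⟨U, -V⟩).re = 0 := by
      rw [hsre]; exact h m hm1 hm4
    have hsplit : ∑ j, x j ^ m * cc j
        = (μ ^ m * ⟨P, Q⟩ + w ^ m * ⟨U, -V⟩)
          + (starRingEnd ℂ) (μ ^ m * ⟨P, Q⟩ + w ^ m * ⟨U, -V⟩) := by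
      simp only [Fin.sum_univ_four, hx, hcc, map_add, map_mul, map_pow,
        Matrix.cons_val_zero, Matrix.cons_val_one, Matrix.head_cons,
        Matrix.cons_val_two, Matrix.tail_cons, Matrix.cons_val_three]
      ring
    rw [hsplit, Complex.add_conj, hkey]
    simp
  have hc0 := keyC_s17 x cc hinj hx0 hsum
  have h0 : (⟨P, Q⟩ : ℂ) = 0 := by
    have := congrFun hc0 0
    simpa [hcc] using this
  have h2 : (⟨U, -V⟩ : ℂ) = 0 := by
    have := congrFun hc0 2
    simpa [hcc] using this
  rw [Complex.ext_iff] at h0 h2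
  simp only [Complex.zero_re, Complex.zero_im] at h0 h2
  refine ⟨h0.1, h0.2, h2.1, ?_⟩
  have := h2.2
  linarith

theorem stmt17 (lam θ : ℝ) (hlam : 1 < lam)
    (hθ : ∀ k : ℤ, θ ≠ k * (Real.pi / 2))
    (p q u v : ℍ)
    (h : ∀ n : ℕ, 1 ≤ n → n ≤ 4 →
      IsComplexQ ((lam ^ n * Real.cos (2 * n * θ)) • p - (lam ^ n * Real.sin (2 * n * θ)) • q
        + Real.cos (n * θ) • u + Real.sin (n * θ) • v)) :
    IsComplexQ p ∧ IsComplexQ q ∧ IsComplexQ u ∧ IsComplexQ v := by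
  have hs : Real.sin θ ≠ 0 := by
    intro hEq
    obtain ⟨k, hk⟩ := Real.sin_eq_zero_iff.1 hEq
    exact hθ (2 * k) (by push_cast; linarith)
  have hc : Real.cos θ ≠ 0 := by
    intro hEq
    obtain ⟨k, hk⟩ := Real.cos_eq_zero_iff.1 hEq
    exact hθ (2 * k + 1) (by push_cast; linarith)
  have hJ := keyR lam θ p.imJ q.imJ u.imJ v.imJ hlam hs hc (fun n h1 h2 => by
    have := (h n h1 h2).1
    simpa [Quaternion.imJ_sub, Quaternion.imJ_add, Quaternion.imJ_smul, smul_eq_mul]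
      using this)
  have hK := keyR lam θ p.imK q.imK u.imK v.imK hlam hs hc (fun n h1 h2 => by
    have := (h n h1 h2).2
    simpa [Quaternion.imK_sub, Quaternion.imK_add, Quaternion.imK_smul, smul_eq_mul]
      using this)
  exact ⟨⟨hJ.1, hK.1⟩, ⟨hJ.2.1, hK.2.1⟩, ⟨hJ.2.2.1, hK.2.2.1⟩, ⟨hJ.2.2.2, hK.2.2.2⟩⟩
end
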